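/- Let K and Q be finite abstract simplicial complexes. Then the Euler characteristic of their simplicial product satisfies χ(K △ Q) = χ(K)·χ(Q). -/

import Mathlib

set_option linter.unusedSectionVars false

section Aux
variable {V W : Type*} [DecidableEq V] [DecidableEq W]

/-- Subsets of `A ×ˢ B` whose first projection is exactly `A`. -/
def goodFst (A : Finset V) (B : Finset W) : Finset (Finset (V × W)) :=
  (A ×ˢ B).powerset.filter (fun F => F.image Prod.fst = A)

/-- Subsets of `A ×ˢ B` with both projections full. -/
def goodBoth (A : Finset V) (B : Finset W) : Finset (Finset (V × W)) :=
  (A ×ˢ B).powerset.filter (fun F => F.image Prod.fst = A ∧ F.image Prod.snd = B)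

lemma mem_goodFst {A : Finset V} {B : Finset W} {F : Finset (V × W)} :
    F ∈ goodFst A B ↔ F ⊆ A ×ˢ B ∧ F.image Prod.fst = A := by
  simp [goodFst]

lemma mem_goodBoth {A : Finset V} {B : Finset W} {F : Finset (V × W)} :
    F ∈ goodBoth A B ↔ F ⊆ A ×ˢ B ∧ F.image Prod.fst = A ∧ F.image Prod.snd = B := by
  simp [goodBoth]

lemma sum_goodFst_empty (B : Finset W) :
    ∑ F ∈ goodFst (∅ : Finset V) B, (-1 : ℤ) ^ F.card = 1 := by
  have h : goodFst (∅ : Finset V) B = {∅} := by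
    ext F
    simp only [mem_goodFst, Finset.empty_product, Finset.subset_empty, Finset.mem_singleton]
    constructor
    · rintro ⟨h, -⟩; exact h
    · rintro rfl; simp
  rw [h]; simp

lemma sum_goodFst_insert (a : V) (A : Finset V) (B : Finset W) (ha : a ∉ A)
    (hB : B.Nonempty) :
    ∑ F ∈ goodFst (insert a A) B, (-1 : ℤ) ^ F.card
      = - ∑ F ∈ goodFst A B, (-1 : ℤ) ^ F.card := by
  have key : ∑ p ∈ (B.powerset.erase ∅) ×ˢ goodFst A B, (-1 : ℤ) ^ (p.1.card + p.2.card)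
      = ∑ F ∈ goodFst (insert a A) B, (-1 : ℤ) ^ F.card := by
    refine Finset.sum_nbij' (fun p => p.1.image (fun b => (a, b)) ∪ p.2)
      (fun F => ((F.filter (fun q => q.1 = a)).image Prod.snd,
                 F.filter (fun q => q.1 ≠ a))) ?_ ?_ ?_ ?_ ?_
    · rintro ⟨R, F⟩ hp
      simp only [Finset.mem_product, Finset.mem_erase] at hp
      obtain ⟨⟨hR0, hRB⟩, hF⟩ := hp
      rw [Finset.mem_powerset] at hRB
      rw [mem_goodFst] at hF ⊢
      constructor
      · intro q hq
        simp only [Finset.mem_union, Finset.mem_image] at hq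
        rcases hq with ⟨b, hb, rfl⟩ | hq
        · exact Finset.mem_product.2 ⟨Finset.mem_insert_self _ _, hRB hb⟩
        · have := hF.1 hq
          rw [Finset.mem_product] at this ⊢
          exact ⟨Finset.mem_insert_of_mem this.1, this.2⟩
      · rw [Finset.image_union, hF.2, Finset.image_image]
        have h1 : R.image ((fun q : V × W => q.1) ∘ (fun b => (a, b))) = {a} := by
          have : ((fun q : V × W => q.1) ∘ (fun b => (a, b))) = fun _ => a := rfl
          rw [this, Finset.image_const (Finset.nonempty_iff_ne_empty.2 hR0)]
        rw [h1, ← Finset.insert_eq]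
    · intro F hF
      rw [mem_goodFst] at hF
      obtain ⟨hsub, himg⟩ := hF
      simp only [Finset.mem_product, Finset.mem_erase, Finset.mem_powerset]
      refine ⟨⟨?_, ?_⟩, ?_⟩
      · -- fiber over a nonempty
        rw [← Finset.nonempty_iff_ne_empty]
        have : a ∈ F.image Prod.fst := himg ▸ Finset.mem_insert_self a A
        obtain ⟨q, hq, hqa⟩ := Finset.mem_image.1 this
        exact ⟨q.2, Finset.mem_image.2 ⟨q, Finset.mem_filter.2 ⟨hq, hqa⟩, rfl⟩⟩
      · intro b hb
        obtain ⟨q, hq, rfl⟩ := Finset.mem_image.1 hb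
        exact (Finset.mem_product.1 (hsub (Finset.mem_filter.1 hq).1)).2
      · rw [mem_goodFst]
        constructor
        · intro q hq
          obtain ⟨hqF, hqa⟩ := Finset.mem_filter.1 hq
          have := Finset.mem_product.1 (hsub hqF)
          refine Finset.mem_product.2 ⟨?_, this.2⟩
          rcases Finset.mem_insert.1 this.1 with h | h
          · exact absurd h hqa
          · exact h
        · apply subset_antisymm
          · intro x hx
            obtain ⟨q, hq, rfl⟩ := Finset.mem_image.1 hx
            obtain ⟨hqF, hqa⟩ := Finset.mem_filter.1 hq
            have := (Finset.mem_product.1 (hsub hqF)).1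
            rcases Finset.mem_insert.1 this with h | h
            · exact absurd h hqa
            · exact h
          · intro x hx
            have hxa : x ≠ a := fun h => ha (h ▸ hx)
            have : x ∈ F.image Prod.fst := himg ▸ Finset.mem_insert_of_mem hx
            obtain ⟨q, hq, rfl⟩ := Finset.mem_image.1 this
            exact Finset.mem_image.2 ⟨q, Finset.mem_filter.2 ⟨hq, hxa⟩, rfl⟩
    · rintro ⟨R, F⟩ hp
      simp only [Finset.mem_product, Finset.mem_erase, Finset.mem_powerset] at hp
      obtain ⟨⟨hR0, hRB⟩, hF⟩ := hp
      rw [mem_goodFst] at hF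
      have hFa : ∀ q ∈ F, q.1 ≠ a := by
        intro q hq h
        exact ha (h ▸ (hF.2 ▸ Finset.mem_image.2 ⟨q, hq, rfl⟩))
      have h1 : (R.image (fun b => (a, b)) ∪ F).filter (fun q => q.1 = a)
          = R.image (fun b => (a, b)) := by
        rw [Finset.filter_union]
        have e1 : (R.image (fun b => (a, b))).filter (fun q => q.1 = a)
            = R.image (fun b => (a, b)) := by
          apply Finset.filter_true_of_mem
          intro q hq
          obtain ⟨b, _, rfl⟩ := Finset.mem_image.1 hq
          rfl
        have e2 : F.filter (fun q => q.1 = a) = ∅ := by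
          apply Finset.filter_false_of_mem
          intro q hq
          exact hFa q hq
        rw [e1, e2, Finset.union_empty]
      have h2 : (R.image (fun b => (a, b)) ∪ F).filter (fun q => q.1 ≠ a) = F := by
        rw [Finset.filter_union]
        have e1 : (R.image (fun b => (a, b))).filter (fun q => q.1 ≠ a) = ∅ := by
          apply Finset.filter_false_of_mem
          intro q hq h
          obtain ⟨b, _, rfl⟩ := Finset.mem_image.1 hq
          exact h rfl
        have e2 : F.filter (fun q => q.1 ≠ a) = F :=
          Finset.filter_true_of_mem hFa
        rw [e1, e2, Finset.empty_union]
      simp only [h1, h2, Finset.image_image]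
      have : ((fun q : V × W => q.2) ∘ (fun b => (a, b))) = id := rfl
      rw [this, Finset.image_id]
    · intro F hF
      rw [mem_goodFst] at hF
      simp only
      have h1 : ((F.filter (fun q => q.1 = a)).image Prod.snd).image (fun b => (a, b))
          = F.filter (fun q => q.1 = a) := by
        ext q
        simp only [Finset.mem_image, Finset.mem_filter]
        constructor
        · rintro ⟨b, ⟨q', ⟨hq', hq'a⟩, rfl⟩, rfl⟩
          have : q' = (a, q'.2) := by rw [← hq'a]
          exact ⟨this ▸ hq', rfl⟩
        · rintro ⟨hq, hqa⟩
          exact ⟨q.2, ⟨q, ⟨hq, hqa⟩, rfl⟩, by rw [← hqa]⟩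
      rw [h1, Finset.filter_union_filter_not_eq]
    · rintro ⟨R, F⟩ hp
      simp only [Finset.mem_product, Finset.mem_erase, Finset.mem_powerset] at hp
      obtain ⟨⟨hR0, hRB⟩, hF⟩ := hp
      rw [mem_goodFst] at hF
      have hdisj : Disjoint (R.image (fun b => (a, b))) F := by
        rw [Finset.disjoint_left]
        intro q hq hqF
        obtain ⟨b, _, rfl⟩ := Finset.mem_image.1 hq
        exact ha (hF.2 ▸ Finset.mem_image.2 ⟨(a, b), hqF, rfl⟩)
      rw [Finset.card_union_of_disjoint hdisj,
        Finset.card_image_of_injective _ (fun x y h => (Prod.mk.injEq a x a y ▸ h).2)]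
  rw [← key, Finset.sum_product]
  have : ∀ R ∈ B.powerset.erase ∅, ∑ F ∈ goodFst A B, (-1 : ℤ) ^ (R.card + F.card)
      = (-1 : ℤ) ^ R.card * ∑ F ∈ goodFst A B, (-1 : ℤ) ^ F.card := by
    intro R _
    rw [Finset.mul_sum]
    exact Finset.sum_congr rfl fun F _ => by rw [pow_add]
  rw [Finset.sum_congr rfl this, ← Finset.sum_mul]
  have hsum : ∑ R ∈ B.powerset.erase ∅, (-1 : ℤ) ^ R.card = -1 := by
    rw [Finset.sum_erase_eq_sub (Finset.empty_mem_powerset B),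
      Finset.sum_powerset_neg_one_pow_card, if_neg (Finset.nonempty_iff_ne_empty.1 hB)]
    simp
  rw [hsum, neg_one_mul]

lemma sum_goodFst (A : Finset V) {B : Finset W} (hB : B.Nonempty) :
    ∑ F ∈ goodFst A B, (-1 : ℤ) ^ F.card = (-1) ^ A.card := by
  induction A using Finset.induction_on with
  | empty => simpa using sum_goodFst_empty B
  | insert a A ha ih =>
    rw [sum_goodFst_insert a A B ha hB, ih, Finset.card_insert_of_notMem ha, pow_succ]
    ring

lemma goodBoth_empty_right {A : Finset V} (hA : A.Nonempty) :
    goodBoth A (∅ : Finset W) = ∅ := by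
  ext F
  simp only [mem_goodBoth, Finset.product_empty, Finset.subset_empty, Finset.notMem_empty,
    iff_false, not_and]
  rintro rfl h
  rw [Finset.image_empty] at h
  exact absurd h.symm (Finset.nonempty_iff_ne_empty.1 hA)

lemma filter_goodFst (A : Finset V) {B B' : Finset W} (hB' : B' ⊆ B) :
    (goodFst A B).filter (fun F => F.image Prod.snd = B') = goodBoth A B' := by
  ext F
  simp only [Finset.mem_filter, mem_goodFst, mem_goodBoth]
  constructor
  · rintro ⟨⟨hsub, h1⟩, h2⟩
    refine ⟨?_, h1, h2⟩
    intro q hq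
    refine Finset.mem_product.2 ⟨(Finset.mem_product.1 (hsub hq)).1, ?_⟩
    exact h2 ▸ Finset.mem_image.2 ⟨q, hq, rfl⟩
  · rintro ⟨hsub, h1, h2⟩
    exact ⟨⟨hsub.trans (Finset.product_subset_product_right hB'), h1⟩, h2⟩

lemma sum_goodBoth {A : Finset V} (hA : A.Nonempty) (B : Finset W) (hB : B.Nonempty) :
    ∑ F ∈ goodBoth A B, (-1 : ℤ) ^ F.card = (-1) ^ (A.card + B.card + 1) := by
  revert hB
  induction B using Finset.strongInduction with
  | _ B ih =>
    intro hB
    set t : Finset W → ℤ := fun B' => (-1 : ℤ) ^ (A.card + B'.card + 1) with ht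
    have hfib : ∑ B' ∈ B.powerset, ∑ F ∈ goodBoth A B', (-1 : ℤ) ^ F.card
        = (-1 : ℤ) ^ A.card := by
      rw [← sum_goodFst A hB]
      have := Finset.sum_fiberwise_of_maps_to (s := goodFst A B) (t := B.powerset)
        (g := fun F => F.image Prod.snd)
        (fun F hF => by
          rw [mem_goodFst] at hF
          rw [Finset.mem_powerset]
          intro b hb
          obtain ⟨q, hq, rfl⟩ := Finset.mem_image.1 hb
          exact (Finset.mem_product.1 (hF.1 hq)).2)
        (fun F => (-1 : ℤ) ^ F.card)
      rw [← this]
      refine Finset.sum_congr rfl fun B' hB' => ?_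
      rw [filter_goodFst A (Finset.mem_powerset.1 hB')]
    have hts : ∑ B' ∈ B.powerset, t B' = 0 := by
      have : ∀ B' ∈ B.powerset, t B' = (-1 : ℤ) ^ (A.card + 1) * (-1) ^ B'.card := by
        intro B' _
        have he : A.card + B'.card + 1 = (A.card + 1) + B'.card := by omega
        rw [ht]
        simp only [he, pow_add]
      rw [Finset.sum_congr rfl this, ← Finset.mul_sum,
        Finset.sum_powerset_neg_one_pow_card, if_neg (Finset.nonempty_iff_ne_empty.1 hB),
        mul_zero]
    have hE : ∑ B' ∈ B.powerset.erase B, ∑ F ∈ goodBoth A B', (-1 : ℤ) ^ F.card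
        = - t B - t ∅ := by
      have hmem : (∅ : Finset W) ∈ B.powerset.erase B :=
        Finset.mem_erase.2 ⟨Ne.symm (Finset.nonempty_iff_ne_empty.1 hB),
          Finset.empty_mem_powerset B⟩
      rw [← Finset.add_sum_erase _ _ hmem, goodBoth_empty_right hA, Finset.sum_empty, zero_add]
      have hcongr : ∀ B' ∈ (B.powerset.erase B).erase ∅,
          ∑ F ∈ goodBoth A B', (-1 : ℤ) ^ F.card = t B' := by
        intro B' hB'
        obtain ⟨hne, hB'2⟩ := Finset.mem_erase.1 hB'
        obtain ⟨hne2, hB'3⟩ := Finset.mem_erase.1 hB'2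
        exact ih B' (Finset.ssubset_iff_subset_ne.2 ⟨Finset.mem_powerset.1 hB'3, hne2⟩)
          (Finset.nonempty_iff_ne_empty.2 hne)
      rw [Finset.sum_congr rfl hcongr, Finset.sum_erase_eq_sub hmem,
        Finset.sum_erase_eq_sub (Finset.mem_powerset_self B), hts]
      ring
    have hsplit : ∑ B' ∈ B.powerset, ∑ F ∈ goodBoth A B', (-1 : ℤ) ^ F.card
        = (∑ F ∈ goodBoth A B, (-1 : ℤ) ^ F.card)
          + ∑ B' ∈ B.powerset.erase B, ∑ F ∈ goodBoth A B', (-1 : ℤ) ^ F.card := by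
      exact (Finset.add_sum_erase _ (fun B' => ∑ F ∈ goodBoth A B', (-1 : ℤ) ^ F.card)
        (Finset.mem_powerset_self B)).symm
    have htempty : t ∅ = -(-1 : ℤ) ^ A.card := by
      rw [ht]; simp [pow_succ]
    have := hfib
    rw [hsplit, hE, htempty] at this
    have : ∑ F ∈ goodBoth A B, (-1 : ℤ) ^ F.card = t B := by linarith
    rw [this]

end Aux

/-- The Euler characteristic of a finite abstract simplicial complex:
`χ(K) = Σ_{F ∈ K} (−1)^(|F|−1)`. -/
def eulerChar {V : Type*} [DecidableEq V] [Fintype V] (K : Finset (Finset V)) : ℤ :=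
  ∑ F ∈ K, (-1 : ℤ) ^ (F.card - 1)

/-- `K` is an abstract simplicial complex with vertex set `V`. -/
def IsComplex {V : Type*} [DecidableEq V] [Fintype V] (K : Finset (Finset V)) : Prop :=
  (∅ ∉ K) ∧ (∀ v : V, {v} ∈ K) ∧ (∀ F ∈ K, ∀ F' ⊆ F, F'.Nonempty → F' ∈ K)

/-- The simplicial product `K △ Q`: a nonempty `F ⊆ V(K) × V(Q)` is a face iff
`π₁(F) ∈ K` and `π₂(F) ∈ Q`. -/
def simpProd {V W : Type*} [DecidableEq V] [DecidableEq W] [Fintype V] [Fintype W]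
    (K : Finset (Finset V)) (Q : Finset (Finset W)) : Finset (Finset (V × W)) :=
  Finset.univ.filter
    (fun F => F.Nonempty ∧ (F.image Prod.fst ∈ K ∧ F.image Prod.snd ∈ Q))

/-- Euler characteristic of the simplicial product: `χ(K △ Q) = χ(K)·χ(Q)`. -/
theorem stmt6 {V W : Type*} [DecidableEq V] [DecidableEq W] [Fintype V] [Fintype W]
    (K : Finset (Finset V)) (Q : Finset (Finset W))
    (hK : IsComplex K) (hQ : IsComplex Q) :
    eulerChar (simpProd K Q) = eulerChar K * eulerChar Q := by
  obtain ⟨hK0, -, -⟩ := hK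
  obtain ⟨hQ0, -, -⟩ := hQ
  have hmaps : ∀ F ∈ simpProd K Q, (F.image Prod.fst, F.image Prod.snd) ∈ K ×ˢ Q := by
    intro F hF
    simp only [simpProd, Finset.mem_filter] at hF
    exact Finset.mem_product.2 ⟨hF.2.2.1, hF.2.2.2⟩
  have hfib : ∀ p ∈ K ×ˢ Q, (simpProd K Q).filter
      (fun F => (F.image Prod.fst, F.image Prod.snd) = p) = goodBoth p.1 p.2 := by
    rintro ⟨A, B⟩ hp
    obtain ⟨hAK, hBQ⟩ := Finset.mem_product.1 hp
    have hA : A.Nonempty := Finset.nonempty_iff_ne_empty.2 (fun h => hK0 (h ▸ hAK))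
    ext F
    simp only [Finset.mem_filter, simpProd, Finset.mem_univ, true_and, mem_goodBoth,
      Prod.mk.injEq]
    constructor
    · rintro ⟨⟨hFne, h1, h2⟩, h3, h4⟩
      refine ⟨?_, h3, h4⟩
      intro q hq
      exact Finset.mem_product.2 ⟨h3 ▸ Finset.mem_image.2 ⟨q, hq, rfl⟩,
        h4 ▸ Finset.mem_image.2 ⟨q, hq, rfl⟩⟩
    · rintro ⟨hsub, h1, h2⟩
      have hFne : F.Nonempty := by
        rw [← Finset.image_nonempty (f := Prod.fst), h1]; exact hA
      exact ⟨⟨hFne, h1 ▸ hAK, h2 ▸ hBQ⟩, h1, h2⟩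
  unfold eulerChar
  rw [← Finset.sum_fiberwise_of_maps_to hmaps (fun F => (-1 : ℤ) ^ (F.card - 1))]
  have hstep : ∀ p ∈ K ×ˢ Q,
      ∑ F ∈ (simpProd K Q).filter (fun F => (F.image Prod.fst, F.image Prod.snd) = p),
        (-1 : ℤ) ^ (F.card - 1)
      = (-1 : ℤ) ^ (p.1.card - 1) * (-1 : ℤ) ^ (p.2.card - 1) := by
    rintro ⟨A, B⟩ hp
    obtain ⟨hAK, hBQ⟩ := Finset.mem_product.1 hp
    have hA : A.Nonempty := Finset.nonempty_iff_ne_empty.2 (fun h => hK0 (h ▸ hAK))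
    have hB : B.Nonempty := Finset.nonempty_iff_ne_empty.2 (fun h => hQ0 (h ▸ hBQ))
    rw [hfib (A, B) hp]
    have hterm : ∀ F ∈ goodBoth A B, (-1 : ℤ) ^ (F.card - 1) = -(-1 : ℤ) ^ F.card := by
      intro F hF
      have hFne : F.Nonempty := by
        rw [← Finset.image_nonempty (f := Prod.fst), (mem_goodBoth.1 hF).2.1]; exact hA
      have hc : F.card - 1 + 1 = F.card := Nat.succ_pred_eq_of_pos hFne.card_pos
      have h5 : (-1 : ℤ) ^ F.card = (-1 : ℤ) ^ (F.card - 1) * (-1) := by rw [← pow_succ, hc]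
      rw [h5]; ring
    rw [Finset.sum_congr rfl hterm, Finset.sum_neg_distrib, sum_goodBoth hA B hB]
    have h1 : 1 ≤ A.card := hA.card_pos
    have h2 : 1 ≤ B.card := hB.card_pos
    have he : A.card + B.card + 1 = (A.card - 1) + (B.card - 1) + 3 := by omega
    rw [he, pow_add, pow_add]
    ring
  rw [Finset.sum_congr rfl hstep, Finset.sum_product]
  exact (Finset.sum_mul_sum K Q (fun A => (-1 : ℤ) ^ (A.card - 1))
    (fun B => (-1 : ℤ) ^ (B.card - 1))).symm
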